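/- There is a constant A > 0 such that the following holds for every real ε > 0 and all integers m, n ≥ 1 with m even and m > εn. Let G = {0,…,m} × {0,…,n} ⊆ ℤ². For the simple random walk on ℤ² started at (m/2, 0), the probability that the walk first exits G to a vertex (i', j') with j' = n+1 is at least 1/(A · n · e^(A/ε)). -/

import Mathlib

/-- The four unit steps of the simple random walk on `ℤ²`. -/
def stepSet : Set (ℤ × ℤ) := {(1, 0), (-1, 0), (0, 1), (0, -1)}

/-- `s` is an exit path for the walk started at `v`: a finite sequence of unit steps
such that all positions `v, v + s₁, …, v + s₁ + ⋯ + s_{L−1}` (i.e. the positions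
strictly before the final one) lie in `A`, while the final position `v + s₁ + ⋯ + s_L`
lies outside `A` and in the target set `B`.  Thus `s` realizes the event that the
simple random walk started at `v` first exits `A` to a vertex of `B`, and this event
has probability `(1/4)^L` where `L` is the length of `s`. -/
def IsExitPath (A B : Set (ℤ × ℤ)) (v : ℤ × ℤ) (s : List (ℤ × ℤ)) : Prop :=
  (∀ x ∈ s, x ∈ stepSet) ∧
  (∀ t < s.length, v + (s.take t).sum ∈ A) ∧
  v + s.sum ∉ A ∧ v + s.sum ∈ B

/-- The probability that the simple random walk on `ℤ²` started at `v` first exits `A`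
to a vertex of `B`: since the first exit time from a finite set `A` is almost surely
finite, this probability is the sum, over all exit paths `s`, of the probability
`(1/4)^length s` that the walk begins with precisely the steps of `s`. -/
noncomputable def exitProb (A B : Set (ℤ × ℤ)) (v : ℤ × ℤ) : ℝ :=
  ∑' s : {s : List (ℤ × ℤ) // IsExitPath A B v s}, ((1 : ℝ) / 4) ^ (s : List (ℤ × ℤ)).length

/-! ### Kraft inequality and summability -/

def stepFinset : Finset (ℤ × ℤ) := {(1, 0), (-1, 0), (0, 1), (0, -1)}

lemma mem_stepFinset_iff {x : ℤ × ℤ} : x ∈ stepFinset ↔ x ∈ stepSet := by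
  simp [stepFinset, stepSet]

lemma card_stepFinset : stepFinset.card = 4 := rfl

def wordsF : ℕ → Finset (List (ℤ × ℤ))
  | 0 => {[]}
  | k+1 => (stepFinset ×ˢ wordsF k).image fun p => p.1 :: p.2

lemma cons_inj_pair : Function.Injective (fun p : (ℤ×ℤ) × List (ℤ×ℤ) => p.1 :: p.2) := by
  rintro ⟨a, l⟩ ⟨b, l'⟩ h
  simpa [Prod.ext_iff] using h

lemma card_wordsF (k : ℕ) : (wordsF k).card = 4 ^ k := by
  induction k with
  | zero => simp [wordsF]
  | succ k ih =>
    rw [wordsF, Finset.card_image_of_injective _ cons_inj_pair, Finset.card_product,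
      card_stepFinset, ih]
    ring

lemma mem_wordsF {k : ℕ} {l : List (ℤ × ℤ)} :
    l ∈ wordsF k ↔ l.length = k ∧ ∀ x ∈ l, x ∈ stepFinset := by
  induction k generalizing l with
  | zero =>
    simp only [wordsF, Finset.mem_singleton]
    constructor
    · rintro rfl; simp
    · rintro ⟨h, -⟩; exact List.length_eq_zero_iff.mp h
  | succ k ih =>
    simp only [wordsF, Finset.mem_image, Finset.mem_product]
    constructor
    · rintro ⟨⟨a, l'⟩, ⟨ha, hl'⟩, rfl⟩
      obtain ⟨hlen, hmem⟩ := ih.mp hl'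
      refine ⟨by simp [hlen], ?_⟩
      intro x hx
      rcases List.mem_cons.mp hx with rfl | hx
      exacts [ha, hmem x hx]
    · rintro ⟨hlen, hmem⟩
      cases l with
      | nil => simp at hlen
      | cons a l' =>
        exact ⟨(a, l'), ⟨hmem a (by simp), ih.mpr ⟨by simpa using hlen,
          fun x hx => hmem x (by simp [hx])⟩⟩, rfl⟩

lemma exit_prefix_eq {A B : Set (ℤ×ℤ)} {v : ℤ×ℤ} {s t : List (ℤ×ℤ)}
    (hs : IsExitPath A B v s) (ht : IsExitPath A B v t) (h : s <+: t) : s = t := by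
  by_contra hne
  have hlt : s.length < t.length :=
    lt_of_le_of_ne h.length_le (fun e => hne (List.IsPrefix.eq_of_length h e))
  have h1 : v + (t.take s.length).sum ∈ A := ht.2.1 _ hlt
  have h2 : t.take s.length = s := (List.prefix_iff_eq_take.mp h).symm
  rw [h2] at h1
  exact hs.2.2.1 h1

lemma kraft_sum_le (A B : Set (ℤ×ℤ)) (v : ℤ×ℤ)
    (u : Finset {s : List (ℤ×ℤ) // IsExitPath A B v s}) :
    ∑ s ∈ u, ((1:ℝ)/4) ^ (s : List (ℤ×ℤ)).length ≤ 1 := by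
  classical
  obtain ⟨N, hlen⟩ : ∃ N, ∀ s ∈ u, (s : List (ℤ×ℤ)).length ≤ N :=
    ⟨u.sup fun s => s.val.length, fun s hs => Finset.le_sup (f := fun t => t.val.length) hs⟩
  set Φ : {s : List (ℤ×ℤ) // IsExitPath A B v s} → Finset (List (ℤ×ℤ)) :=
    fun s => (wordsF (N - (s : List (ℤ×ℤ)).length)).image ((s : List (ℤ×ℤ)) ++ ·) with hΦ
  have hcard : ∀ s, (Φ s).card = 4 ^ (N - (s : List (ℤ×ℤ)).length) := by
    intro s
    rw [hΦ, Finset.card_image_of_injective _ (fun a b h => by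
      simpa using List.append_cancel_left h), card_wordsF]
  have hsub : ∀ s ∈ u, Φ s ⊆ wordsF N := by
    intro s hs x hx
    simp only [hΦ, Finset.mem_image] at hx
    obtain ⟨w, hw, rfl⟩ := hx
    obtain ⟨hwl, hwm⟩ := mem_wordsF.mp hw
    refine mem_wordsF.mpr ⟨?_, ?_⟩
    · simp [hwl, Nat.add_sub_cancel' (hlen s hs)]
    · intro x hx
      rcases List.mem_append.mp hx with hx | hx
      · exact mem_stepFinset_iff.mpr (s.2.1 x hx)
      · exact hwm x hx
  have hdisj : ∀ s ∈ u, ∀ t ∈ u, s ≠ t → Disjoint (Φ s) (Φ t) := by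
    intro s _ t _ hne
    rw [Finset.disjoint_left]
    intro x hxs hxt
    simp only [hΦ, Finset.mem_image] at hxs hxt
    obtain ⟨w, -, hw⟩ := hxs
    obtain ⟨w', -, hw'⟩ := hxt
    have hps : (s : List (ℤ×ℤ)) <+: x := ⟨w, hw⟩
    have hpt : (t : List (ℤ×ℤ)) <+: x := ⟨w', hw'⟩
    rcases le_total (s : List (ℤ×ℤ)).length (t : List (ℤ×ℤ)).length with hle | hle
    · exact hne (Subtype.ext (exit_prefix_eq s.2 t.2
        (List.prefix_of_prefix_length_le hps hpt hle)))
    · exact hne (Subtype.ext (exit_prefix_eq t.2 s.2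
        (List.prefix_of_prefix_length_le hpt hps hle)).symm)
  have key : ∑ s ∈ u, ((1:ℝ)/4) ^ (s : List (ℤ×ℤ)).length
      = ((u.biUnion Φ).card : ℝ) / 4 ^ N := by
    rw [Finset.card_biUnion hdisj]
    push_cast
    rw [Finset.sum_div]
    refine Finset.sum_congr rfl fun s hs => ?_
    rw [hcard s]
    have h4 : ((4:ℝ)) ^ (N - (s : List (ℤ×ℤ)).length) = 4 ^ N * ((4:ℝ) ^ (s : List (ℤ×ℤ)).length)⁻¹ :=
      pow_sub₀ (4:ℝ) (by norm_num) (hlen s hs)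
    push_cast
    rw [h4]
    rw [div_pow, one_pow]
    field_simp
  rw [key]
  rw [div_le_one (by positivity)]
  have : (u.biUnion Φ).card ≤ (wordsF N).card :=
    Finset.card_le_card (Finset.biUnion_subset.mpr hsub)
  calc ((u.biUnion Φ).card : ℝ) ≤ ((wordsF N).card : ℝ) := by exact_mod_cast this
    _ = 4 ^ N := by rw [card_wordsF]; push_cast; ring

lemma exit_summable (A B : Set (ℤ×ℤ)) (v : ℤ×ℤ) :
    Summable (fun s : {s : List (ℤ×ℤ) // IsExitPath A B v s} =>
      ((1:ℝ)/4) ^ (s : List (ℤ×ℤ)).length) :=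
  summable_of_sum_le (fun s => by positivity) (kraft_sum_le A B v)

lemma sum_le_exitProb (A B : Set (ℤ×ℤ)) (v : ℤ×ℤ) (F : Finset (List (ℤ×ℤ)))
    (hF : ∀ s ∈ F, IsExitPath A B v s) :
    ∑ s ∈ F, ((1:ℝ)/4) ^ s.length ≤ exitProb A B v := by
  classical
  have hinj : Function.Injective
      (fun s : {x // x ∈ F} => (⟨s.1, hF s.1 s.2⟩ : {s : List (ℤ×ℤ) // IsExitPath A B v s})) := by
    intro a b h
    exact Subtype.ext (congrArg (fun x : {s : List (ℤ×ℤ) // IsExitPath A B v s} => x.1) h)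
  have : ∑ s ∈ F, ((1:ℝ)/4) ^ s.length
      = ∑ s ∈ F.attach.image (fun s => (⟨s.1, hF s.1 s.2⟩ : {s : List (ℤ×ℤ) // IsExitPath A B v s})),
          ((1:ℝ)/4) ^ (s : List (ℤ×ℤ)).length := by
    rw [Finset.sum_image (fun a _ b _ h => hinj h)]
    exact (Finset.sum_attach F fun s => ((1:ℝ)/4) ^ s.length).symm
  rw [this]
  exact Summable.sum_le_tsum _ (fun i _ => by positivity) (exit_summable A B v)

lemma exitProb_nonneg (A B : Set (ℤ×ℤ)) (v : ℤ×ℤ) : 0 ≤ exitProb A B v :=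
  tsum_nonneg fun s => by positivity

/-! ### The grid, truncated exit-path sets, and survival probabilities -/

def Gset (m n : ℕ) : Set (ℤ×ℤ) := {p : ℤ × ℤ | 0 ≤ p.1 ∧ p.1 ≤ (m:ℤ) ∧ 0 ≤ p.2 ∧ p.2 ≤ (n:ℤ)}

def Bset (n : ℕ) : Set (ℤ×ℤ) := {p : ℤ × ℤ | p.2 = (n : ℤ) + 1}

instance GsetDec (m n : ℕ) (p : ℤ×ℤ) : Decidable (p ∈ Gset m n) :=
  decidable_of_iff (0 ≤ p.1 ∧ p.1 ≤ (m:ℤ) ∧ 0 ≤ p.2 ∧ p.2 ≤ (n:ℤ)) Iff.rfl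

def EP (m n : ℕ) : ℕ → (ℤ×ℤ) → Finset (List (ℤ×ℤ))
  | 0, v => if v ∉ Gset m n ∧ v.2 = (n:ℤ)+1 then {[]} else ∅
  | T+1, v =>
    if v ∈ Gset m n then
      ((EP m n T (v + (1,0))).image ((1,0) :: ·)) ∪
      ((EP m n T (v + (-1,0))).image ((-1,0) :: ·)) ∪
      ((EP m n T (v + (0,1))).image ((0,1) :: ·)) ∪
      ((EP m n T (v + (0,-1))).image ((0,-1) :: ·))
    else if v.2 = (n:ℤ)+1 then {[]} else ∅

noncomputable def qs (m n : ℕ) : ℕ → (ℤ×ℤ) → ℝ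
  | 0, v => if v ∈ Gset m n then 1 else 0
  | T+1, v => if v ∈ Gset m n then
      (qs m n T (v+(1,0)) + qs m n T (v+(-1,0)) + qs m n T (v+(0,1)) + qs m n T (v+(0,-1)))/4
    else 0

lemma qs_zero (m n : ℕ) (v : ℤ×ℤ) : qs m n 0 v = if v ∈ Gset m n then 1 else 0 := rfl

lemma qs_succ (m n T : ℕ) (v : ℤ×ℤ) : qs m n (T+1) v =
    if v ∈ Gset m n then
      (qs m n T (v+(1,0)) + qs m n T (v+(-1,0)) + qs m n T (v+(0,1)) + qs m n T (v+(0,-1)))/4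
    else 0 := rfl

lemma isExitPath_cons {A B : Set (ℤ×ℤ)} {v d : ℤ×ℤ} {s : List (ℤ×ℤ)}
    (hd : d ∈ stepSet) (hv : v ∈ A) (h : IsExitPath A B (v+d) s) :
    IsExitPath A B v (d :: s) := by
  obtain ⟨h1, h2, h3, h4⟩ := h
  refine ⟨?_, ?_, ?_, ?_⟩
  · intro x hx
    rcases List.mem_cons.mp hx with rfl | hx
    exacts [hd, h1 x hx]
  · intro t ht
    cases t with
    | zero => simpa using hv
    | succ k =>
      have hk : k < s.length := by simpa using ht
      have := h2 k hk
      rwa [List.take_succ_cons, List.sum_cons, ← add_assoc]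
  · rw [List.sum_cons, ← add_assoc]; exact h3
  · rw [List.sum_cons, ← add_assoc]; exact h4

lemma isExitPath_nil {A B : Set (ℤ×ℤ)} {v : ℤ×ℤ} (h1 : v ∉ A) (h2 : v ∈ B) :
    IsExitPath A B v [] :=
  ⟨by simp, by simp, by simpa using h1, by simpa using h2⟩

lemma EP_exit (m n : ℕ) : ∀ T v s, s ∈ EP m n T v → IsExitPath (Gset m n) (Bset n) v s := by
  intro T
  induction T with
  | zero =>
    intro v s hs
    rw [EP] at hs
    split_ifs at hs with h
    · rw [Finset.mem_singleton] at hs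
      subst hs
      exact isExitPath_nil h.1 h.2
    · simp at hs
  | succ T ih =>
    intro v s hs
    rw [EP] at hs
    split_ifs at hs with h hB
    · simp only [Finset.mem_union, Finset.mem_image] at hs
      rcases hs with (((⟨a,ha,rfl⟩|⟨a,ha,rfl⟩)|⟨a,ha,rfl⟩)|⟨a,ha,rfl⟩) <;>
        exact isExitPath_cons (by simp [stepSet]) h (ih _ _ ha)
    · rw [Finset.mem_singleton] at hs
      subst hs
      exact isExitPath_nil h hB
    · simp at hs

noncomputable def uS (m n : ℕ) (T : ℕ) (v : ℤ×ℤ) : ℝ :=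
  ∑ s ∈ EP m n T v, ((1:ℝ)/4)^s.length

lemma uS_nonneg (m n T : ℕ) (v : ℤ×ℤ) : 0 ≤ uS m n T v :=
  Finset.sum_nonneg fun s _ => by positivity

lemma uS_le_exitProb (m n T : ℕ) (v : ℤ×ℤ) :
    uS m n T v ≤ exitProb (Gset m n) (Bset n) v :=
  sum_le_exitProb _ _ _ _ (EP_exit m n T v)

lemma disj_cons_image {d1 d2 : ℤ×ℤ} (h : d1 ≠ d2) (F1 F2 : Finset (List (ℤ×ℤ))) :
    Disjoint (F1.image (d1 :: ·)) (F2.image (d2 :: ·)) := by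
  rw [Finset.disjoint_left]
  rintro x hx1 hx2
  obtain ⟨a, -, rfl⟩ := Finset.mem_image.mp hx1
  obtain ⟨b, -, hb⟩ := Finset.mem_image.mp hx2
  simp only [List.cons.injEq] at hb
  exact h hb.1.symm

lemma sum_image_cons (d : ℤ×ℤ) (F : Finset (List (ℤ×ℤ))) :
    ∑ s ∈ F.image (d :: ·), ((1:ℝ)/4)^s.length = (1/4) * ∑ s ∈ F, ((1:ℝ)/4)^s.length := by
  rw [Finset.sum_image (fun a _ b _ h => by simpa using h), Finset.mul_sum]
  refine Finset.sum_congr rfl fun s _ => ?_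
  rw [List.length_cons, pow_succ]
  ring

lemma uS_rec {m n : ℕ} {v : ℤ×ℤ} (hv : v ∈ Gset m n) (T : ℕ) :
    uS m n (T+1) v = (uS m n T (v+(1,0)) + uS m n T (v+(-1,0))
      + uS m n T (v+(0,1)) + uS m n T (v+(0,-1)))/4 := by
  unfold uS
  rw [show EP m n (T+1) v = ((EP m n T (v + (1,0))).image ((1,0) :: ·)) ∪
      ((EP m n T (v + (-1,0))).image ((-1,0) :: ·)) ∪
      ((EP m n T (v + (0,1))).image ((0,1) :: ·)) ∪
      ((EP m n T (v + (0,-1))).image ((0,-1) :: ·)) from by rw [EP]; rw [if_pos hv]]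
  rw [Finset.sum_union (by
    refine Finset.disjoint_union_left.mpr ⟨Finset.disjoint_union_left.mpr ⟨?_, ?_⟩, ?_⟩ <;>
      exact disj_cons_image (by decide) _ _)]
  rw [Finset.sum_union (by
    refine Finset.disjoint_union_left.mpr ⟨?_, ?_⟩ <;> exact disj_cons_image (by decide) _ _)]
  rw [Finset.sum_union (disj_cons_image (by decide) _ _)]
  rw [sum_image_cons, sum_image_cons, sum_image_cons, sum_image_cons]
  ring

lemma uS_out {m n : ℕ} {v : ℤ×ℤ} (hv : v ∉ Gset m n) (hB : v.2 = (n:ℤ)+1) (T : ℕ) :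
    uS m n T v = 1 := by
  cases T with
  | zero => unfold uS; rw [EP, if_pos ⟨hv, hB⟩]; simp
  | succ T => unfold uS; rw [EP, if_neg hv, if_pos hB]; simp

lemma uS_out' {m n : ℕ} {v : ℤ×ℤ} (hv : v ∉ Gset m n) (hB : v.2 ≠ (n:ℤ)+1) (T : ℕ) :
    uS m n T v = 0 := by
  cases T with
  | zero => unfold uS; rw [EP, if_neg (by tauto)]; simp
  | succ T => unfold uS; rw [EP, if_neg hv, if_neg hB]; simp

lemma qs_nonneg (m n : ℕ) : ∀ T v, 0 ≤ qs m n T v := by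
  intro T
  induction T with
  | zero => intro v; rw [qs_zero]; split_ifs <;> norm_num
  | succ T ih =>
    intro v
    rw [qs_succ]
    split_ifs
    · have h1 := ih (v+(1,0)); have h2 := ih (v+(-1,0))
      have h3 := ih (v+(0,1)); have h4 := ih (v+(0,-1))
      linarith
    · exact le_refl 0

lemma qs_le_one (m n : ℕ) : ∀ T v, qs m n T v ≤ 1 := by
  intro T
  induction T with
  | zero => intro v; rw [qs_zero]; split_ifs <;> norm_num
  | succ T ih =>
    intro v
    rw [qs_succ]
    split_ifs
    · have h1 := ih (v+(1,0)); have h2 := ih (v+(-1,0))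
      have h3 := ih (v+(0,1)); have h4 := ih (v+(0,-1))
      linarith
    · norm_num

lemma qs_out {m n : ℕ} {v : ℤ×ℤ} (hv : v ∉ Gset m n) : ∀ T, qs m n T v = 0 := by
  intro T
  cases T with
  | zero => rw [qs_zero, if_neg hv]
  | succ T => rw [qs_succ, if_neg hv]

lemma qs_mul (m n : ℕ) (b : ℕ) (C : ℝ) (hC0 : 0 ≤ C) (hC : ∀ w, qs m n b w ≤ C) :
    ∀ a v, qs m n (a + b) v ≤ C * qs m n a v := by
  intro a
  induction a with
  | zero =>
    intro v
    by_cases hv : v ∈ Gset m n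
    · rw [qs_zero, if_pos hv, mul_one]
      simpa using hC v
    · rw [qs_out hv, qs_out hv, mul_zero]
  | succ a ih =>
    intro v
    by_cases hv : v ∈ Gset m n
    · rw [Nat.succ_add, qs_succ, qs_succ, if_pos hv, if_pos hv]
      have h1 := ih (v+(1,0)); have h2 := ih (v+(-1,0))
      have h3 := ih (v+(0,1)); have h4 := ih (v+(0,-1))
      linarith
    · rw [Nat.succ_add, qs_succ, qs_succ, if_neg hv, if_neg hv, mul_zero]

lemma qs_height (m n : ℕ) : ∀ (k : ℕ) (v : ℤ×ℤ), v ∈ Gset m n → (n:ℤ) + 1 - v.2 ≤ (k:ℤ) →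
    qs m n k v ≤ 1 - (1/4:ℝ)^k := by
  intro k
  induction k with
  | zero =>
    intro v hv hk
    exfalso
    have := hv.2.2.2
    omega
  | succ k ih =>
    intro v hv hk
    have hup : qs m n k (v+(0,1)) ≤ 1 - (1/4:ℝ)^k := by
      by_cases h : v + (0,1) ∈ Gset m n
      · refine ih _ h ?_
        have : (v + (0,1)).2 = v.2 + 1 := rfl
        omega
      · rw [qs_out h]
        have h0 : (0:ℝ) < (1/4:ℝ)^k := by positivity
        have h1 : (1/4:ℝ)^k ≤ 1 := by apply pow_le_one₀ <;> norm_num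
        linarith
    rw [qs_succ, if_pos hv]
    have h1 := qs_le_one m n k (v+(1,0))
    have h2 := qs_le_one m n k (v+(-1,0))
    have h4 := qs_le_one m n k (v+(0,-1))
    have : (1/4:ℝ)^(k+1) = (1/4:ℝ)^k/4 := by rw [pow_succ]; ring
    rw [this]
    linarith

lemma qs_block (m n : ℕ) (hn : 1 ≤ n) : ∀ w, qs m n (n+2) w ≤ 1 - (1/4:ℝ)^(n+2) := by
  intro w
  by_cases hw : w ∈ Gset m n
  · refine qs_height m n (n+2) w hw ?_
    have h1 := hw.2.2.1
    omega
  · rw [qs_out hw]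
    have : (0:ℝ) < (1/4:ℝ)^(n+2) := by positivity
    have h2 : (1/4:ℝ)^(n+2) ≤ 1 := by
      apply pow_le_one₀ <;> norm_num
    linarith

lemma qs_decay (m n : ℕ) (hn : 1 ≤ n) :
    ∀ K v, qs m n (K * (n+2)) v ≤ (1 - (1/4:ℝ)^(n+2))^K := by
  intro K
  induction K with
  | zero =>
    intro v
    simpa using qs_le_one m n 0 v
  | succ K ih =>
    intro v
    have hC0 : (0:ℝ) ≤ 1 - (1/4:ℝ)^(n+2) := by
      have h2 : (1/4:ℝ)^(n+2) ≤ 1 := by apply pow_le_one₀ <;> norm_num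
      linarith
    have := qs_mul m n (n+2) _ hC0 (qs_block m n hn) (K * (n+2)) v
    have hrw : (K+1) * (n+2) = K * (n+2) + (n+2) := by ring
    rw [hrw]
    calc qs m n (K * (n+2) + (n+2)) v ≤ (1 - (1/4:ℝ)^(n+2)) * qs m n (K * (n+2)) v := this
      _ ≤ (1 - (1/4:ℝ)^(n+2)) * (1 - (1/4:ℝ)^(n+2))^K := by
          exact mul_le_mul_of_nonneg_left (ih v) hC0
      _ = (1 - (1/4:ℝ)^(n+2))^(K+1) := by rw [pow_succ]; ring

/-! ### Comparison with a subharmonic function -/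

def Hood (m n : ℕ) (v : ℤ×ℤ) : Prop :=
  -1 ≤ v.1 ∧ v.1 ≤ (m:ℤ)+1 ∧ -1 ≤ v.2 ∧ v.2 ≤ (n:ℤ)+1

lemma hood_of_mem_add {m n : ℕ} {v d : ℤ×ℤ} (hG : v ∈ Gset m n)
    (hd : d = (1,0) ∨ d = (-1,0) ∨ d = (0,1) ∨ d = (0,-1)) : Hood m n (v+d) := by
  obtain ⟨a1, a2, a3, a4⟩ := hG
  rcases hd with rfl|rfl|rfl|rfl <;>
    refine ⟨?_, ?_, ?_, ?_⟩ <;> simp [Prod.fst_add, Prod.snd_add] <;> omega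

lemma comparison (m n : ℕ) (φ : ℤ×ℤ → ℝ)
    (hharm : ∀ v ∈ Gset m n,
      φ v = (φ (v+(1,0)) + φ (v+(-1,0)) + φ (v+(0,1)) + φ (v+(0,-1)))/4)
    (hone : ∀ v, Hood m n v → φ v ≤ 1)
    (hout : ∀ v, Hood m n v → v ∉ Gset m n → v.2 ≠ (n:ℤ)+1 → φ v ≤ 0) :
    ∀ T v, Hood m n v → φ v ≤ uS m n T v + qs m n T v := by
  intro T
  induction T with
  | zero =>
    intro v hv
    by_cases hG : v ∈ Gset m n
    · have h1 := uS_nonneg m n 0 v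
      rw [qs_zero, if_pos hG]
      have := hone v hv
      linarith
    · rw [qs_zero, if_neg hG]
      by_cases hB : v.2 = (n:ℤ)+1
      · rw [uS_out hG hB]
        have := hone v hv; linarith
      · rw [uS_out' hG hB]
        have := hout v hv hG hB; linarith
  | succ T ih =>
    intro v hv
    by_cases hG : v ∈ Gset m n
    · rw [uS_rec hG, qs_succ, if_pos hG]
      have k1 := ih _ (hood_of_mem_add hG (Or.inl rfl))
      have k2 := ih _ (hood_of_mem_add hG (Or.inr (Or.inl rfl)))
      have k3 := ih _ (hood_of_mem_add hG (Or.inr (Or.inr (Or.inl rfl))))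
      have k4 := ih _ (hood_of_mem_add hG (Or.inr (Or.inr (Or.inr rfl))))
      rw [hharm v hG]
      linarith
    · rw [qs_succ, if_neg hG]
      by_cases hB : v.2 = (n:ℤ)+1
      · rw [uS_out hG hB]
        have := hone v hv; linarith
      · rw [uS_out' hG hB]
        have := hout v hv hG hB; linarith

lemma phi_le_exitProb (m n : ℕ) (hn : 1 ≤ n) (φ : ℤ×ℤ → ℝ)
    (hharm : ∀ v ∈ Gset m n,
      φ v = (φ (v+(1,0)) + φ (v+(-1,0)) + φ (v+(0,1)) + φ (v+(0,-1)))/4)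
    (hone : ∀ v, Hood m n v → φ v ≤ 1)
    (hout : ∀ v, Hood m n v → v ∉ Gset m n → v.2 ≠ (n:ℤ)+1 → φ v ≤ 0)
    (v : ℤ×ℤ) (hv : v ∈ Gset m n) :
    φ v ≤ exitProb (Gset m n) (Bset n) v := by
  have hvh : Hood m n v := by
    obtain ⟨a1, a2, a3, a4⟩ := hv
    exact ⟨by omega, by omega, by omega, by omega⟩
  set c := 1 - (1/4:ℝ)^(n+2) with hcdef
  have hc0 : 0 ≤ c := by
    have h2 : (1/4:ℝ)^(n+2) ≤ 1 := by apply pow_le_one₀ <;> norm_num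
    rw [hcdef]; linarith
  have hc1 : c < 1 := by
    have h2 : (0:ℝ) < (1/4:ℝ)^(n+2) := by positivity
    rw [hcdef]; linarith
  have key : ∀ K : ℕ, φ v - c^K ≤ exitProb (Gset m n) (Bset n) v := by
    intro K
    have h1 := comparison m n φ hharm hone hout (K*(n+2)) v hvh
    have h2 := qs_decay m n hn K v
    have h3 := uS_le_exitProb m n (K*(n+2)) v
    rw [hcdef]
    linarith
  have ht : Filter.Tendsto (fun K : ℕ => φ v - c^K) Filter.atTop (nhds (φ v - 0)) :=
    Filter.Tendsto.sub tendsto_const_nhds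
      (tendsto_pow_atTop_nhds_zero_of_lt_one hc0 hc1)
  have := le_of_tendsto ht (Filter.Eventually.of_forall key)
  linarith

/-! ### Analytic helper lemmas -/

lemma sinh_le_mul_exp {x : ℝ} (hx : 0 ≤ x) : Real.sinh x ≤ x * Real.exp x := by
  rw [Real.sinh_eq]
  have h1 : -(2*x) + 1 ≤ Real.exp (-(2*x)) := Real.add_one_le_exp _
  have h2 : Real.exp (-(2*x)) * Real.exp x = Real.exp (-x) := by
    rw [← Real.exp_add]; ring_nf
  have h3 : (0:ℝ) < Real.exp x := Real.exp_pos x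
  nlinarith [Real.exp_pos (-x)]

lemma cosh_ge_quadratic {x : ℝ} (hx : 0 ≤ x) : 1 + x^2/2 ≤ Real.cosh x := by
  have h := Real.cosh_two_mul (x/2)
  rw [show 2*(x/2) = x by ring] at h
  have h2 := Real.cosh_sq (x/2)
  have h3 : x/2 ≤ Real.sinh (x/2) := Real.self_le_sinh_iff.mpr (by linarith)
  nlinarith [Real.cosh_pos (x/2)]

lemma cos_lt_one_of {x : ℝ} (hx : 0 < x) (hx2 : x ≤ Real.pi) : Real.cos x < 1 := by
  have hs : 0 < Real.sin (x/2) :=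
    Real.sin_pos_of_pos_of_lt_pi (by linarith) (by nlinarith [Real.pi_pos])
  have h := Real.cos_two_mul' (x/2)
  rw [show 2*(x/2) = x by ring] at h
  have h2 := Real.sin_sq_add_cos_sq (x/2)
  nlinarith

/-! ### The discrete harmonic product function -/

lemma harm_sum (θ α Z : ℝ) (hc : Real.cosh α = 2 - Real.cos θ) (x y : ℝ) :
    Real.sin (θ*(x+1+1)) * (Real.sinh (α*(y+1))/Z)
  + Real.sin (θ*(x-1+1)) * (Real.sinh (α*(y+1))/Z)
  + Real.sin (θ*(x+1)) * (Real.sinh (α*(y+1+1))/Z)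
  + Real.sin (θ*(x+1)) * (Real.sinh (α*(y-1+1))/Z)
  = 4 * (Real.sin (θ*(x+1)) * (Real.sinh (α*(y+1))/Z)) := by
  have h1 : Real.sin (θ*(x+1+1)) + Real.sin (θ*(x-1+1))
      = 2 * Real.sin (θ*(x+1)) * Real.cos θ := by
    rw [show θ*(x+1+1) = θ*(x+1) + θ by ring, show θ*(x-1+1) = θ*(x+1) - θ by ring,
      Real.sin_add, Real.sin_sub]
    ring
  have h2 : Real.sinh (α*(y+1+1)) + Real.sinh (α*(y-1+1))
      = 2 * Real.sinh (α*(y+1)) * Real.cosh α := by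
    rw [show α*(y+1+1) = α*(y+1) + α by ring, show α*(y-1+1) = α*(y+1) - α by ring,
      Real.sinh_add, Real.sinh_sub]
    ring
  have key : Real.sin (θ*(x+1+1)) * Real.sinh (α*(y+1))
      + Real.sin (θ*(x-1+1)) * Real.sinh (α*(y+1))
      + Real.sin (θ*(x+1)) * Real.sinh (α*(y+1+1))
      + Real.sin (θ*(x+1)) * Real.sinh (α*(y-1+1))
      = 4 * (Real.sin (θ*(x+1)) * Real.sinh (α*(y+1))) := by
    linear_combination Real.sinh (α*(y+1)) * h1 + Real.sin (θ*(x+1)) * h2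
      + 2 * Real.sin (θ*(x+1)) * Real.sinh (α*(y+1)) * hc
  rw [← mul_div_assoc, ← mul_div_assoc, ← mul_div_assoc, ← mul_div_assoc,
    ← add_div, ← add_div, ← add_div, key]
  ring

noncomputable def phiF (θ α Z : ℝ) (v : ℤ×ℤ) : ℝ :=
  Real.sin (θ*((v.1:ℝ)+1)) * (Real.sinh (α*((v.2:ℝ)+1))/Z)


set_option maxHeartbeats 1000000 in
/-- There is a constant `A > 0` such that for every `ε > 0` and all `m, n ≥ 1` with `m`
even and `m > εn`, the simple random walk on `ℤ²` started at `(m/2, 0)` first exits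
`G = {0,…,m} × {0,…,n}` to a vertex `(i', j')` with `j' = n+1` with probability at
least `1/(A n e^(A/ε))`. -/
theorem stmt10 :
    ∃ A : ℝ, 0 < A ∧ ∀ ε : ℝ, 0 < ε → ∀ m n : ℕ, 1 ≤ m → 1 ≤ n → Even m →
      (m : ℝ) > ε * n →
      exitProb {p : ℤ × ℤ | 0 ≤ p.1 ∧ p.1 ≤ m ∧ 0 ≤ p.2 ∧ p.2 ≤ n}
          {p : ℤ × ℤ | p.2 = (n : ℤ) + 1} ((m : ℤ) / 2, 0) ≥
        1 / (A * n * Real.exp (A / ε)) := by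
  refine ⟨10, by norm_num, ?_⟩
  intro ε hε m n hm hn heven hmn
  rw [ge_iff_le,
    show {p : ℤ × ℤ | 0 ≤ p.1 ∧ p.1 ≤ (m:ℤ) ∧ 0 ≤ p.2 ∧ p.2 ≤ (n:ℤ)} = Gset m n from rfl,
    show {p : ℤ × ℤ | p.2 = (n:ℤ)+1} = Bset n from rfl]
  have hmR : (1:ℝ) ≤ (m:ℝ) := by exact_mod_cast hm
  have hnR : (1:ℝ) ≤ (n:ℝ) := by exact_mod_cast hn
  set θ : ℝ := Real.pi / ((m:ℝ)+2) with hθdef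
  have hθpos : 0 < θ := div_pos Real.pi_pos (by linarith)
  have hθle : θ ≤ Real.pi := by
    rw [hθdef]
    apply div_le_self Real.pi_pos.le
    linarith
  have hcos1 : Real.cos θ < 1 := cos_lt_one_of hθpos hθle
  have hcosm1 : -1 ≤ Real.cos θ := Real.neg_one_le_cos θ
  set c : ℝ := 2 - Real.cos θ with hcdef
  have hc1 : 1 < c := by rw [hcdef]; linarith
  set s0 : ℝ := Real.sqrt (c^2 - 1) with hs0def
  have hs0 : s0^2 = c^2 - 1 := Real.sq_sqrt (by nlinarith)
  have hs0pos : 0 ≤ s0 := Real.sqrt_nonneg _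
  set t : ℝ := c + s0 with htdef
  have ht1 : 1 < t := by rw [htdef]; linarith
  set α : ℝ := Real.log t with hαdef
  have hαpos : 0 < α := Real.log_pos ht1
  have hexpα : Real.exp α = t := Real.exp_log (by linarith)
  have hmul : (c - s0) * t = 1 := by rw [htdef]; nlinarith
  have hexpnα : Real.exp (-α) = c - s0 := by
    rw [Real.exp_neg, hexpα]
    exact (eq_inv_of_mul_eq_one_left hmul).symm
  have hcoshα : Real.cosh α = c := by
    rw [Real.cosh_eq, hexpα, hexpnα, htdef]; ring
  have hαθ : α ≤ θ := by
    have hcc : Real.cosh α ≤ Real.cosh θ := by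
      rw [hcoshα, hcdef]
      have h1 := cosh_ge_quadratic hθpos.le
      have h2 := Real.one_sub_sq_div_two_le_cos (x := θ)
      linarith
    have := Real.cosh_le_cosh.mp hcc
    rwa [abs_of_nonneg hαpos.le, abs_of_nonneg hθpos.le] at this
  set Z : ℝ := Real.sinh (α*((n:ℝ)+2)) with hZdef
  have hZpos : 0 < Z := by
    rw [hZdef]
    exact Real.sinh_pos_iff.mpr (by positivity)
  -- harmonicity
  have hharm : ∀ v ∈ Gset m n, phiF θ α Z v = (phiF θ α Z (v+(1,0)) + phiF θ α Z (v+(-1,0))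
      + phiF θ α Z (v+(0,1)) + phiF θ α Z (v+(0,-1)))/4 := by
    intro v _
    have e1 : (((v + ((1:ℤ),(0:ℤ))).1 : ℤ) : ℝ) = (v.1:ℝ)+1 := by
      push_cast [Prod.fst_add]; ring
    have e2 : (((v + ((1:ℤ),(0:ℤ))).2 : ℤ) : ℝ) = (v.2:ℝ) := by
      push_cast [Prod.snd_add]; ring
    have e3 : (((v + ((-1:ℤ),(0:ℤ))).1 : ℤ) : ℝ) = (v.1:ℝ)-1 := by
      push_cast [Prod.fst_add]; ring
    have e4 : (((v + ((-1:ℤ),(0:ℤ))).2 : ℤ) : ℝ) = (v.2:ℝ) := by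
      push_cast [Prod.snd_add]; ring
    have e5 : (((v + ((0:ℤ),(1:ℤ))).1 : ℤ) : ℝ) = (v.1:ℝ) := by
      push_cast [Prod.fst_add]; ring
    have e6 : (((v + ((0:ℤ),(1:ℤ))).2 : ℤ) : ℝ) = (v.2:ℝ)+1 := by
      push_cast [Prod.snd_add]; ring
    have e7 : (((v + ((0:ℤ),(-1:ℤ))).1 : ℤ) : ℝ) = (v.1:ℝ) := by
      push_cast [Prod.fst_add]; ring
    have e8 : (((v + ((0:ℤ),(-1:ℤ))).2 : ℤ) : ℝ) = (v.2:ℝ)-1 := by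
      push_cast [Prod.snd_add]; ring
    simp only [phiF]
    rw [e1, e2, e3, e4, e5, e6, e7, e8]
    have h := harm_sum θ α Z (by rw [hcoshα, hcdef]) (v.1:ℝ) (v.2:ℝ)
    linarith
  -- bounded by 1
  have hone : ∀ v, Hood m n v → phiF θ α Z v ≤ 1 := by
    intro v hv
    simp only [phiF]
    have hsin : Real.sin (θ*((v.1:ℝ)+1)) ≤ 1 := Real.sin_le_one _
    have hy1 : (-1:ℝ) ≤ (v.2:ℝ) := by exact_mod_cast hv.2.2.1
    have hy2 : (v.2:ℝ) ≤ (n:ℝ)+1 := by exact_mod_cast hv.2.2.2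
    have hnum0 : 0 ≤ Real.sinh (α*((v.2:ℝ)+1)) := by
      apply Real.sinh_nonneg_iff.mpr
      nlinarith
    have hle : Real.sinh (α*((v.2:ℝ)+1)) ≤ Z := by
      rw [hZdef]
      apply Real.sinh_le_sinh.mpr
      nlinarith
    have hr1 : Real.sinh (α*((v.2:ℝ)+1))/Z ≤ 1 := by
      rw [div_le_one hZpos]; exact hle
    have hr0 : 0 ≤ Real.sinh (α*((v.2:ℝ)+1))/Z := div_nonneg hnum0 hZpos.le
    have hmm := mul_le_mul_of_nonneg_right hsin hr0
    rw [one_mul] at hmm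
    linarith
  -- nonpositive on the killed boundary
  have hout : ∀ v, Hood m n v → v ∉ Gset m n → v.2 ≠ (n:ℤ)+1 → phiF θ α Z v ≤ 0 := by
    intro v hv hG hB
    have hcase : v.1 = -1 ∨ v.1 = (m:ℤ)+1 ∨ v.2 = -1 := by
      obtain ⟨a1, a2, a3, a4⟩ := hv
      by_contra hcon
      push_neg at hcon
      exact hG ⟨by omega, by omega, by omega, by omega⟩
    simp only [phiF]
    rcases hcase with h|h|h
    · rw [h]; norm_num
    · rw [h]
      have hme : ((m:ℝ)+2) ≠ 0 := by linarith
      have : θ*((((m:ℤ)+1 : ℤ):ℝ)+1) = Real.pi := by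
        push_cast
        rw [hθdef, div_mul_eq_mul_div, div_eq_iff hme]
        ring
      rw [this, Real.sin_pi]
      norm_num
    · rw [h]
      norm_num
  -- start vertex
  have hstart : ((m:ℤ)/2, (0:ℤ)) ∈ Gset m n := by
    refine ⟨Int.ediv_nonneg (by positivity) (by norm_num),
      Int.ediv_le_self _ (by positivity), le_refl 0, by positivity⟩
  have hmain := phi_le_exitProb m n hn (phiF θ α Z) hharm hone hout ((m:ℤ)/2, 0) hstart
  -- value at the start vertex
  obtain ⟨k, hk⟩ := heven
  have hk1 : 1 ≤ k := by omega
  have hdiv : (m:ℤ)/2 = (k:ℤ) := by omega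
  have hphis : phiF θ α Z ((m:ℤ)/2, 0) = Real.sinh α / Z := by
    simp only [phiF]
    have hx : ((((m:ℤ)/2 : ℤ)) : ℝ) = (k:ℝ) := by rw [hdiv]; norm_num
    have hmk : (m:ℝ) = 2*(k:ℝ) := by
      rw [hk]; push_cast; ring
    have hsin1 : Real.sin (θ*(((((m:ℤ)/2 : ℤ)):ℝ)+1)) = 1 := by
      rw [hx, hθdef, hmk]
      have h2 : Real.pi/(2*(k:ℝ)+2)*((k:ℝ)+1) = Real.pi/2 := by
        have hk0 : (1:ℝ) ≤ (k:ℝ) := by exact_mod_cast hk1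
        field_simp
      rw [h2, Real.sin_pi_div_two]
    rw [hsin1]
    norm_num
  rw [hphis] at hmain
  -- numeric estimates
  have hπ : Real.pi < 3.15 := Real.pi_lt_d2
  have hαn2 : α*((n:ℝ)+2) ≤ 10/ε := by
    have h1 : α*((n:ℝ)+2) ≤ θ*((n:ℝ)+2) := by nlinarith
    have h2 : θ*((n:ℝ)+2) ≤ 10/ε := by
      rw [hθdef, div_mul_eq_mul_div, div_le_div_iff₀ (by linarith) hε]
      have hpin : Real.pi * ((n:ℝ)+2) ≤ 3.15 * (3*(n:ℝ)) := by nlinarith [Real.pi_pos]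
      nlinarith [hε.le, hmn]
    linarith
  have hexp10 : (0:ℝ) < Real.exp (10/ε) := Real.exp_pos _
  have hsinhα : α ≤ Real.sinh α := Real.self_le_sinh_iff.mpr hαpos.le
  have hZle : Z ≤ Real.sinh α * (10*(n:ℝ)*Real.exp (10/ε)) := by
    have h1 : Z ≤ (α*((n:ℝ)+2)) * Real.exp (α*((n:ℝ)+2)) := by
      rw [hZdef]
      exact sinh_le_mul_exp (by positivity)
    have h2 : Real.exp (α*((n:ℝ)+2)) ≤ Real.exp (10/ε) := Real.exp_le_exp.mpr hαn2
    have h3 : (α*((n:ℝ)+2)) * Real.exp (α*((n:ℝ)+2)) ≤ (α*((n:ℝ)+2)) * Real.exp (10/ε) := by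
      apply mul_le_mul_of_nonneg_left h2 (by positivity)
    have h4 : (α*((n:ℝ)+2)) * Real.exp (10/ε) ≤ (Real.sinh α * (10*(n:ℝ))) * Real.exp (10/ε) := by
      apply mul_le_mul_of_nonneg_right _ hexp10.le
      nlinarith
    calc Z ≤ (α*((n:ℝ)+2)) * Real.exp (α*((n:ℝ)+2)) := h1
      _ ≤ (α*((n:ℝ)+2)) * Real.exp (10/ε) := h3
      _ ≤ (Real.sinh α * (10*(n:ℝ))) * Real.exp (10/ε) := h4
      _ = Real.sinh α * (10*(n:ℝ)*Real.exp (10/ε)) := by ring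
  have hfin : 1/(10*(n:ℝ)*Real.exp (10/ε)) ≤ Real.sinh α / Z := by
    rw [div_le_div_iff₀ (by positivity) hZpos]
    linarith
  exact le_trans hfin hmain
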